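/- For any nonzero real number α, the quotient Q(α,m) := (∑_{n=1}^m ⌊αn⌋^3) / (∑_{n=1}^m ⌊αn⌋)^2 tends to α as m → ∞. -/

import Mathlib

open Finset Filter

lemma sum_id_Icc (m : ℕ) : ∑ n ∈ Icc 1 m, (n : ℝ) = m * (m + 1) / 2 := by
  induction m with
  | zero => simp
  | succ k ih =>
    rw [Finset.sum_Icc_succ_top (by omega : 1 ≤ k + 1), ih]
    push_cast; ring

lemma sum_cube_Icc (m : ℕ) : ∑ n ∈ Icc 1 m, (n : ℝ) ^ 3 = (m * (m + 1) / 2) ^ 2 := by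
  induction m with
  | zero => simp
  | succ k ih =>
    rw [Finset.sum_Icc_succ_top (by omega : 1 ≤ k + 1), ih]
    push_cast; ring

lemma floor_err (x : ℝ) : |(⌊x⌋ : ℝ) - x| ≤ 1 := by
  have h1 := Int.floor_le x
  have h2 := Int.lt_floor_add_one x
  rw [abs_le]; constructor <;> linarith

lemma cube_err (x y : ℝ) (h : |x - y| ≤ 1) : |x ^ 3 - y ^ 3| ≤ 3 * (|y| + 1) ^ 2 := by
  have hx : |x| ≤ |y| + 1 := by
    calc |x| = |y + (x - y)| := by ring_nf
    _ ≤ |y| + |x - y| := abs_add_le _ _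
    _ ≤ |y| + 1 := by linarith
  have h3 : x ^ 3 - y ^ 3 = (x - y) * (x ^ 2 + x * y + y ^ 2) := by ring
  rw [h3, abs_mul]
  have h4 : |x ^ 2 + x * y + y ^ 2| ≤ 3 * (|y| + 1) ^ 2 := by
    calc |x ^ 2 + x * y + y ^ 2| ≤ |x| ^ 2 + |x| * |y| + |y| ^ 2 := by
          calc |x ^ 2 + x * y + y ^ 2| ≤ |x ^ 2 + x * y| + |y ^ 2| := abs_add_le _ _
          _ ≤ |x ^ 2| + |x * y| + |y ^ 2| := by linarith [abs_add_le (x ^ 2) (x * y)]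
          _ = |x| ^ 2 + |x| * |y| + |y| ^ 2 := by rw [abs_mul, abs_pow, abs_pow]
    _ ≤ 3 * (|y| + 1) ^ 2 := by nlinarith [abs_nonneg x, abs_nonneg y]
  calc |x - y| * |x ^ 2 + x * y + y ^ 2| ≤ 1 * (3 * (|y| + 1) ^ 2) := by
        apply mul_le_mul h h4 (abs_nonneg _) (by norm_num)
  _ = 3 * (|y| + 1) ^ 2 := by ring

lemma tendsto_S1 (α : ℝ) :
    Tendsto (fun m : ℕ => (∑ n ∈ Icc 1 m, (⌊α * n⌋ : ℝ)) / (m : ℝ) ^ 2) atTop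
      (nhds (α / 2)) := by
  have key : ∀ m : ℕ, (∑ n ∈ Icc 1 m, (⌊α * n⌋ : ℝ)) / (m : ℝ) ^ 2
      = α * ((m : ℝ) * (m + 1) / 2) / (m : ℝ) ^ 2
        + (∑ n ∈ Icc 1 m, ((⌊α * n⌋ : ℝ) - α * n)) / (m : ℝ) ^ 2 := by
    intro m
    have h2 : (∑ n ∈ Icc 1 m, (⌊α * n⌋ : ℝ))
        = α * ((m : ℝ) * (m + 1) / 2) + ∑ n ∈ Icc 1 m, ((⌊α * n⌋ : ℝ) - α * n) := by
      rw [Finset.sum_sub_distrib, ← Finset.mul_sum, sum_id_Icc]; ring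
    rw [h2, add_div]
  have T1 : Tendsto (fun m : ℕ => α * ((m : ℝ) * (m + 1) / 2) / (m : ℝ) ^ 2) atTop
      (nhds (α / 2)) := by
    have base : Tendsto (fun m : ℕ => α / 2 * (1 + 1 / (m : ℝ))) atTop (nhds (α / 2)) := by
      have := (tendsto_one_div_atTop_nhds_zero_nat.const_add 1).const_mul (α / 2)
      simpa using this
    apply base.congr'
    filter_upwards [eventually_ge_atTop 1] with m hm
    have hm0 : (m : ℝ) ≠ 0 := by positivity
    field_simp
  have T2 : Tendsto (fun m : ℕ => (∑ n ∈ Icc 1 m, ((⌊α * n⌋ : ℝ) - α * n)) / (m : ℝ) ^ 2)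
      atTop (nhds 0) := by
    apply squeeze_zero_norm' (a := fun m : ℕ => 1 / (m : ℝ))
    · filter_upwards [eventually_ge_atTop 1] with m hm
      have hm0 : (0:ℝ) < (m : ℝ) := by positivity
      have hb : |∑ n ∈ Icc 1 m, ((⌊α * n⌋ : ℝ) - α * n)| ≤ m := by
        calc |∑ n ∈ Icc 1 m, ((⌊α * n⌋ : ℝ) - α * n)|
            ≤ ∑ n ∈ Icc 1 m, |(⌊α * n⌋ : ℝ) - α * n| := Finset.abs_sum_le_sum_abs _ _
        _ ≤ ∑ _n ∈ Icc 1 m, (1 : ℝ) := Finset.sum_le_sum fun n _ => floor_err _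
        _ = m := by simp [Nat.card_Icc]
      rw [Real.norm_eq_abs, abs_div, abs_of_nonneg (by positivity : (0:ℝ) ≤ (m:ℝ)^2)]
      rw [div_le_div_iff₀ (by positivity) hm0]
      calc |∑ n ∈ Icc 1 m, ((⌊α * n⌋ : ℝ) - α * n)| * m ≤ m * m := by
            apply mul_le_mul_of_nonneg_right hb (le_of_lt hm0)
      _ ≤ 1 * (m : ℝ) ^ 2 := by nlinarith
    · exact tendsto_one_div_atTop_nhds_zero_nat
  have := T1.add T2
  rw [add_zero] at this
  exact this.congr fun m => (key m).symm

lemma tendsto_S3 (α : ℝ) :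
    Tendsto (fun m : ℕ => (∑ n ∈ Icc 1 m, (⌊α * n⌋ : ℝ) ^ 3) / (m : ℝ) ^ 4) atTop
      (nhds (α ^ 3 / 4)) := by
  have key : ∀ m : ℕ, (∑ n ∈ Icc 1 m, (⌊α * n⌋ : ℝ) ^ 3) / (m : ℝ) ^ 4
      = α ^ 3 * ((m : ℝ) * (m + 1) / 2) ^ 2 / (m : ℝ) ^ 4
        + (∑ n ∈ Icc 1 m, ((⌊α * n⌋ : ℝ) ^ 3 - (α * n) ^ 3)) / (m : ℝ) ^ 4 := by
    intro m
    have h1 : ∑ n ∈ Icc 1 m, (α * (n : ℝ)) ^ 3 = α ^ 3 * ((m : ℝ) * (m + 1) / 2) ^ 2 := by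
      rw [← sum_cube_Icc m, Finset.mul_sum]
      apply Finset.sum_congr rfl
      intro n _; ring
    have h2 : (∑ n ∈ Icc 1 m, (⌊α * n⌋ : ℝ) ^ 3)
        = α ^ 3 * ((m : ℝ) * (m + 1) / 2) ^ 2
          + ∑ n ∈ Icc 1 m, ((⌊α * n⌋ : ℝ) ^ 3 - (α * n) ^ 3) := by
      rw [Finset.sum_sub_distrib, h1]; ring
    rw [h2, add_div]
  have T1 : Tendsto (fun m : ℕ => α ^ 3 * ((m : ℝ) * (m + 1) / 2) ^ 2 / (m : ℝ) ^ 4) atTop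
      (nhds (α ^ 3 / 4)) := by
    have base : Tendsto (fun m : ℕ => α ^ 3 / 4 * (1 + 1 / (m : ℝ)) ^ 2) atTop
        (nhds (α ^ 3 / 4)) := by
      have := ((tendsto_one_div_atTop_nhds_zero_nat.const_add 1).pow 2).const_mul (α ^ 3 / 4)
      simpa using this
    apply base.congr'
    filter_upwards [eventually_ge_atTop 1] with m hm
    have hm0 : (m : ℝ) ≠ 0 := by positivity
    field_simp
    ring
  have T2 : Tendsto
      (fun m : ℕ => (∑ n ∈ Icc 1 m, ((⌊α * n⌋ : ℝ) ^ 3 - (α * n) ^ 3)) / (m : ℝ) ^ 4)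
      atTop (nhds 0) := by
    apply squeeze_zero_norm' (a := fun m : ℕ => 3 * (|α| + 1) ^ 2 * (1 / (m : ℝ)))
    · filter_upwards [eventually_ge_atTop 1] with m hm
      have hm0 : (0:ℝ) < (m : ℝ) := by positivity
      have hm1 : (1:ℝ) ≤ (m : ℝ) := by exact_mod_cast hm
      have hb : |∑ n ∈ Icc 1 m, ((⌊α * n⌋ : ℝ) ^ 3 - (α * n) ^ 3)|
          ≤ m * (3 * ((|α| + 1) * m) ^ 2) := by
        calc |∑ n ∈ Icc 1 m, ((⌊α * n⌋ : ℝ) ^ 3 - (α * n) ^ 3)|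
            ≤ ∑ n ∈ Icc 1 m, |(⌊α * n⌋ : ℝ) ^ 3 - (α * n) ^ 3| :=
              Finset.abs_sum_le_sum_abs _ _
        _ ≤ ∑ _n ∈ Icc 1 m, 3 * ((|α| + 1) * m) ^ 2 := by
              apply Finset.sum_le_sum
              intro n hn
              have hn' : (n : ℝ) ≤ m := by
                exact_mod_cast (Finset.mem_Icc.mp hn).2
              have hn1 : (1:ℝ) ≤ (n : ℝ) := by
                exact_mod_cast (Finset.mem_Icc.mp hn).1
              have := cube_err (⌊α * n⌋ : ℝ) (α * n) (floor_err _)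
              refine this.trans ?_
              have habs : |α * (n:ℝ)| + 1 ≤ (|α| + 1) * m := by
                rw [abs_mul, abs_of_nonneg (by linarith : (0:ℝ) ≤ (n:ℝ))]
                have : |α| * n ≤ |α| * m :=
                  mul_le_mul_of_nonneg_left hn' (abs_nonneg α)
                nlinarith
              have h0 : (0:ℝ) ≤ |α * (n:ℝ)| + 1 := by positivity
              nlinarith
        _ = m * (3 * ((|α| + 1) * m) ^ 2) := by
              rw [Finset.sum_const, Nat.card_Icc]; simp [nsmul_eq_mul]
      rw [Real.norm_eq_abs, abs_div, abs_of_nonneg (by positivity : (0:ℝ) ≤ (m:ℝ)^4)]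
      rw [div_le_iff₀ (by positivity)]
      have hexp : 3 * (|α| + 1) ^ 2 * (1 / (m : ℝ)) * (m : ℝ) ^ 4
          = m * (3 * ((|α| + 1) * m) ^ 2) * m * (1 / m) := by
        field_simp
      rw [hexp]
      calc |∑ n ∈ Icc 1 m, ((⌊α * n⌋ : ℝ) ^ 3 - (α * n) ^ 3)|
          ≤ m * (3 * ((|α| + 1) * m) ^ 2) := hb
      _ = m * (3 * ((|α| + 1) * m) ^ 2) * m * (1 / m) := by
            field_simp
    · have := tendsto_one_div_atTop_nhds_zero_nat.const_mul (3 * (|α| + 1) ^ 2)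
      simpa using this
  have := T1.add T2
  rw [add_zero] at this
  exact this.congr fun m => (key m).symm

noncomputable def Q (α : ℝ) (m : ℕ) : ℝ :=
  (∑ n ∈ Finset.Icc 1 m, (⌊α * n⌋ : ℝ) ^ 3) / (∑ n ∈ Finset.Icc 1 m, (⌊α * n⌋ : ℝ)) ^ 2

theorem Q_tendsto (α : ℝ) (hα : α ≠ 0) :
    Filter.Tendsto (fun m => Q α m) Filter.atTop (nhds α) := by
  have hA := tendsto_S1 α
  have hB := tendsto_S3 α
  have hden : (α / 2) ^ 2 ≠ 0 := by positivity
  have hdiv := hB.div (hA.pow 2) (by positivity)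
  have hval : α ^ 3 / 4 / (α / 2) ^ 2 = α := by
    field_simp; ring
  rw [hval] at hdiv
  apply hdiv.congr'
  filter_upwards [eventually_ge_atTop 1] with m hm
  have hm0 : ((m : ℝ) ^ 2) ≠ 0 := by
    have : (0:ℝ) < m := by exact_mod_cast Nat.lt_of_lt_of_le Nat.zero_lt_one hm
    positivity
  unfold Q
  simp only [Pi.div_apply]
  rw [div_pow]
  have h4 : ((m : ℝ) ^ 2) ^ 2 = (m : ℝ) ^ 4 := by ring
  rw [h4]
  by_cases hS : (∑ n ∈ Icc 1 m, (⌊α * n⌋ : ℝ)) = 0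
  · simp [hS]
  · have hm4 : ((m : ℝ) ^ 4) ≠ 0 := by
      have : (0:ℝ) < m := by exact_mod_cast Nat.lt_of_lt_of_le Nat.zero_lt_one hm
      positivity
    rw [div_div_div_cancel_right₀ hm4]
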